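/- In odd-even transposition sort on an array of length N, each full round (one even-phase pass followed by one odd-phase pass) does not increase the number of inversions, and after N-1 rounds the array is sorted in ascending order. -/
import Mathlib

/-- One phase of odd-even transposition sort: simultaneously swap each
adjacent pair `(A i, A (i+1))` with `i % 2 = r % 2` and `A i > A (i+1)`. -/
def phase (r : ℕ) {N : ℕ} (A : Fin N → ℤ) : Fin N → ℤ := fun i =>
  if i.val % 2 = r % 2 then
    if h : i.val + 1 < N then
      if A i > A ⟨i.val + 1, h⟩ then A ⟨i.val + 1, h⟩ else A i
    else A i
  else
    if h : 1 ≤ i.val then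
      if A ⟨i.val - 1, by omega⟩ > A i then A ⟨i.val - 1, by omega⟩ else A i
    else A i

namespace OETS

variable {N : ℕ}

lemma phase_eq_min_max (r : ℕ) (B : Fin N → ℤ) (i : Fin N) :
    phase r B i =
      if i.val % 2 = r % 2 then
        if h : i.val + 1 < N then min (B i) (B ⟨i.val + 1, h⟩) else B i
      else
        if h : 1 ≤ i.val then max (B ⟨i.val - 1, by omega⟩) (B i) else B i := by
  unfold phase
  split_ifs with h1 h2 h3 h4 h5 <;> first
    | rfl
    | (rw [min_def]; split_ifs <;> omega)
    | (rw [max_def]; split_ifs <;> omega)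

def runF (A : Fin N → ℤ) : ℕ → Fin N → ℤ
  | 0 => A
  | (t+1) => phase t (runF A t)

def swapFun (r : ℕ) (B : Fin N → ℤ) (i : Fin N) : Fin N :=
  if i.val % 2 = r % 2 then
    if h : i.val + 1 < N then
      (if B i > B ⟨i.val + 1, h⟩ then ⟨i.val + 1, h⟩ else i)
    else i
  else
    if h : 1 ≤ i.val then
      (if B ⟨i.val - 1, by omega⟩ > B i then ⟨i.val - 1, by omega⟩ else i)
    else i

lemma phase_eq_comp (r : ℕ) (B : Fin N → ℤ) (i : Fin N) :
    phase r B i = B (swapFun r B i) := by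
  unfold phase swapFun
  split_ifs <;> rfl

lemma swapFun_involutive (r : ℕ) (B : Fin N → ℤ) :
    Function.Involutive (swapFun r B) := by
  intro i
  by_cases h1 : i.val % 2 = r % 2
  · by_cases h2 : i.val + 1 < N
    · by_cases h3 : B i > B ⟨i.val + 1, h2⟩
      · have e1 : swapFun r B i = ⟨i.val + 1, h2⟩ := by
          simp [swapFun, h1, h2, h3]
        rw [e1]
        have h1' : ¬ ((i.val + 1) % 2 = r % 2) := by omega
        have h4 : 1 ≤ i.val + 1 := by omega
        have e2 : (⟨i.val + 1 - 1, by omega⟩ : Fin N) = i := by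
          apply Fin.ext; simp
        simp [swapFun, h1', h4, e2, h3]
      · simp [swapFun, h1, h2, h3]
    · simp [swapFun, h1, h2]
  · by_cases h2 : 1 ≤ i.val
    · by_cases h3 : B ⟨i.val - 1, by omega⟩ > B i
      · have e1 : swapFun r B i = ⟨i.val - 1, by omega⟩ := by
          simp [swapFun, h1, h2, h3]
        rw [e1]
        have h1' : (i.val - 1) % 2 = r % 2 := by omega
        have h4 : i.val - 1 + 1 < N := by omega
        have e2 : (⟨i.val - 1 + 1, h4⟩ : Fin N) = i := by
          apply Fin.ext; simp; omega
        simp only [swapFun, if_pos h1', dif_pos h4, e2]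
        rw [if_pos h3]
      · simp [swapFun, h1, h2, h3]
    · simp [swapFun, h1, h2]

lemma multiset_phase (r : ℕ) (B : Fin N → ℤ) :
    Multiset.map (phase r B) Finset.univ.val = Multiset.map B Finset.univ.val := by
  have hinv := swapFun_involutive r B
  have hcomp : phase r B = fun i => B (swapFun r B i) := funext (phase_eq_comp r B)
  rw [hcomp]
  have : Multiset.map (swapFun r B) Finset.univ.val = Finset.univ.val := by
    have h := Finset.map_univ_equiv hinv.toPerm
    have := congrArg Finset.val h
    simpa [Finset.map] using this
  calc Multiset.map (fun i => B (swapFun r B i)) Finset.univ.val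
      = Multiset.map B (Multiset.map (swapFun r B) Finset.univ.val) := by
        rw [Multiset.map_map]; rfl
    _ = Multiset.map B Finset.univ.val := by rw [this]

lemma phase_comp_mono (g : ℤ → ℤ) (hg : Monotone g) (r : ℕ) (B : Fin N → ℤ) :
    phase r (g ∘ B) = g ∘ phase r B := by
  funext i
  show phase r (g ∘ B) i = g (phase r B i)
  rw [phase_eq_min_max, phase_eq_min_max]
  split_ifs with h1 h2 h3
  · show min (g (B i)) (g (B _)) = g (min (B i) (B _))
    exact (hg.map_min).symm
  · rfl
  · show max (g (B _)) (g (B i)) = g (max (B _) (B i))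
    exact (hg.map_max).symm
  · rfl

lemma phase_parity {r s : ℕ} (h : r % 2 = s % 2) (B : Fin N → ℤ) :
    phase r B = phase s B := by
  funext i; unfold phase; rw [h]

lemma runF_two_mul (A : Fin N → ℤ) (s : ℕ) :
    runF A (2 * s) = (fun B => phase 1 (phase 0 B))^[s] A := by
  induction s with
  | zero => rfl
  | succ s ih =>
    have h2 : 2 * (s + 1) = (2 * s) + 1 + 1 := by ring
    rw [h2]
    show phase (2*s+1) (phase (2*s) (runF A (2*s))) = _
    rw [phase_parity (show (2*s) % 2 = 0 % 2 by omega),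
        phase_parity (show (2*s+1) % 2 = 1 % 2 by omega), ih,
        Function.iterate_succ_apply']

lemma runF_comm (g : ℤ → ℤ) (hg : Monotone g) (A : Fin N → ℤ) (t : ℕ) :
    runF (g ∘ A) t = g ∘ runF A t := by
  induction t with
  | zero => rfl
  | succ t ih =>
    show phase t (runF (g ∘ A) t) = _
    rw [ih, phase_comp_mono g hg]
    rfl


variable (C : Fin N → ℤ)

def vv (t j : ℕ) : ℤ := if h : j < N then runF C t ⟨j, h⟩ else 0

def SS : Finset (Fin N) := Finset.univ.filter (fun i => C i = 1)

def mm : ℕ := (SS C).card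

def ee : Fin (mm C) ≃o {x // x ∈ SS C} := (SS C).orderIsoOfFin rfl

def initx : ℕ → ℕ
  | 0 => N
  | (k+1) =>
    if h : k + 1 ≤ mm C then ((ee C ⟨mm C - (k+1), by omega⟩ : Fin N)).val else 0

def mvc (t p : ℕ) : Prop := p % 2 = t % 2 ∧ p + 1 < N ∧ vv C t (p+1) = 0

instance (t p : ℕ) : Decidable (mvc C t p) := by unfold mvc; infer_instance

def xx (k : ℕ) : ℕ → ℕ
  | 0 => initx C k
  | (t+1) => if mvc C t (xx k t) then xx k t + 1 else xx k t

lemma xx_succ (k t : ℕ) :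
    xx C k (t+1) = if mvc C t (xx C k t) then xx C k t + 1 else xx C k t := rfl

lemma xx_zero_t : ∀ t, xx C 0 t = N := by
  intro t; induction t with
  | zero => rfl
  | succ t ih =>
    rw [xx_succ, ih]
    have h : ¬ mvc C t N := fun h => by have := h.2.1; omega
    rw [if_neg h]

lemma moved_iff (k t : ℕ) :
    xx C k (t+1) = xx C k t + 1 ↔ mvc C t (xx C k t) := by
  rw [xx_succ]; split_ifs with h
  · simp [h]
  · constructor
    · intro hh; omega
    · intro hh; exact absurd hh h

lemma not_moved (k t : ℕ) (h : ¬ mvc C t (xx C k t)) : xx C k (t+1) = xx C k t := by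
  rw [xx_succ, if_neg h]

lemma xx_cases (k t : ℕ) :
    xx C k (t+1) = xx C k t ∨
      (mvc C t (xx C k t) ∧ xx C k (t+1) = xx C k t + 1) := by
  rw [xx_succ]; split_ifs with h
  · exact Or.inr ⟨h, rfl⟩
  · exact Or.inl rfl

lemma vv_eq (t j : ℕ) (h : j < N) : vv C t j = runF C t ⟨j, h⟩ := dif_pos h

lemma z01 (h01 : ∀ i, C i = 0 ∨ C i = 1) :
    ∀ t (i : Fin N), runF C t i = 0 ∨ runF C t i = 1 := by
  intro t; induction t with
  | zero => exact h01
  | succ t ih =>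
    intro i
    show phase t (runF C t) i = 0 ∨ phase t (runF C t) i = 1
    rw [phase_eq_min_max]
    split_ifs with h1 h2 h3
    · rcases ih i with h | h <;> rcases ih ⟨i.val + 1, h2⟩ with h' | h' <;>
        rw [h, h'] <;> simp
    · exact ih i
    · rcases ih ⟨i.val - 1, by omega⟩ with h | h <;> rcases ih i with h' | h' <;>
        rw [h, h'] <;> simp
    · exact ih i

lemma vv01 (h01 : ∀ i, C i = 0 ∨ C i = 1) (t j : ℕ) (h : j < N) :
    vv C t j = 0 ∨ vv C t j = 1 := by
  rw [vv_eq C t j h]; exact z01 C h01 t _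

lemma vv_step_lo (t j : ℕ) (h2 : j % 2 = t % 2) (hj : j + 1 < N) :
    vv C (t+1) j = min (vv C t j) (vv C t (j+1)) := by
  have hjN : j < N := by omega
  rw [vv_eq C (t+1) j hjN, vv_eq C t j hjN, vv_eq C t (j+1) hj]
  show phase t (runF C t) ⟨j, hjN⟩ = _
  rw [phase_eq_min_max]
  rw [if_pos h2, dif_pos hj]

lemma vv_step_lo_end (t j : ℕ) (h2 : j % 2 = t % 2) (hjN : j < N) (hj : ¬ (j + 1 < N)) :
    vv C (t+1) j = vv C t j := by
  rw [vv_eq C (t+1) j hjN, vv_eq C t j hjN]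
  show phase t (runF C t) ⟨j, hjN⟩ = _
  rw [phase_eq_min_max]
  rw [if_pos h2, dif_neg hj]

lemma vv_step_hi (t j : ℕ) (h2 : ¬ (j % 2 = t % 2)) (h1 : 1 ≤ j) (hjN : j < N) :
    vv C (t+1) j = max (vv C t (j-1)) (vv C t j) := by
  rw [vv_eq C (t+1) j hjN, vv_eq C t j hjN, vv_eq C t (j-1) (by omega)]
  show phase t (runF C t) ⟨j, hjN⟩ = _
  rw [phase_eq_min_max]
  rw [if_neg h2, dif_pos h1]

lemma vv_step_hi0 (t : ℕ) (h2 : ¬ ((0:ℕ) % 2 = t % 2)) (hjN : 0 < N) :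
    vv C (t+1) 0 = vv C t 0 := by
  rw [vv_eq C (t+1) 0 hjN, vv_eq C t 0 hjN]
  show phase t (runF C t) ⟨0, hjN⟩ = _
  rw [phase_eq_min_max]
  rw [if_neg h2, dif_neg (by simp)]


lemma mm_le : mm C ≤ N := by
  have h := Finset.card_filter_le (Finset.univ : Finset (Fin N)) (fun i => C i = 1)
  simpa [mm, SS] using h

lemma initx_le (k : ℕ) : initx C k ≤ N := by
  cases k with
  | zero => exact le_refl N
  | succ k =>
    show (if h : k + 1 ≤ mm C then ((ee C ⟨mm C - (k+1), by omega⟩ : Fin N)).val else 0) ≤ N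
    split_ifs with h
    · exact le_of_lt ((ee C _ : Fin N)).isLt
    · omega

lemma initx_eq (k : ℕ) (h1 : 1 ≤ k) (h2 : k ≤ mm C) :
    initx C k = ((ee C ⟨mm C - k, by omega⟩ : Fin N)).val := by
  obtain ⟨k', rfl⟩ : ∃ k', k = k' + 1 := ⟨k - 1, by omega⟩
  show (if h : k' + 1 ≤ mm C then ((ee C ⟨mm C - (k'+1), by omega⟩ : Fin N)).val else 0) = _
  rw [dif_pos h2]

lemma initx_lt (k : ℕ) (h1 : 1 ≤ k) (h2 : k ≤ mm C) : initx C k < N := by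
  rw [initx_eq C k h1 h2]
  exact ((ee C _ : Fin N)).isLt

lemma vv_zero (j : ℕ) (h : j < N) : vv C 0 j = C ⟨j, h⟩ := by
  rw [vv_eq C 0 j h]; rfl

lemma vv_initx (k : ℕ) (h1 : 1 ≤ k) (h2 : k ≤ mm C) : vv C 0 (initx C k) = 1 := by
  rw [initx_eq C k h1 h2]
  rw [vv_zero C _ ((ee C _ : Fin N)).isLt]
  have hmem := (ee C ⟨mm C - k, by omega⟩).2
  rw [Fin.eta]
  simp only [SS, Finset.mem_filter] at hmem
  exact hmem.2

lemma ee_val_lt_iff {a b : Fin (mm C)} :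
    ((ee C a : Fin N)).val < ((ee C b : Fin N)).val ↔ a < b := by
  constructor
  · intro h
    by_contra hc
    push_neg at hc
    rcases lt_or_eq_of_le hc with h' | h'
    · have := (ee C).lt_iff_lt.mpr h'
      have hlt : (ee C b : Fin N) < (ee C a : Fin N) := this
      rw [Fin.lt_def] at hlt
      omega
    · subst h'; omega
  · intro h
    have := (ee C).lt_iff_lt.mpr h
    have hlt : (ee C a : Fin N) < (ee C b : Fin N) := this
    rwa [Fin.lt_def] at hlt

lemma ee_surj (j : Fin N) (hj : C j = 1) : ∃ i, ((ee C i : Fin N)) = j := by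
  have hjS : j ∈ SS C := Finset.mem_filter.mpr ⟨Finset.mem_univ _, hj⟩
  obtain ⟨i, hi⟩ := (ee C).surjective ⟨j, hjS⟩
  exact ⟨i, by rw [hi]⟩

lemma one_mem (h01 : ∀ i, C i = 0 ∨ C i = 1) (j : ℕ) (hjN : j < N)
    (hj : vv C 0 j = 1) : ∃ i : Fin (mm C), ((ee C i : Fin N)).val = j := by
  rw [vv_zero C j hjN] at hj
  obtain ⟨i, hi⟩ := ee_surj C ⟨j, hjN⟩ hj
  exact ⟨i, by rw [hi]⟩

def Inv (t : ℕ) : Prop :=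
  (∀ k, k < mm C → xx C (k+1) t < xx C k t) ∧
  (∀ k, 1 ≤ k → k ≤ mm C → vv C t (xx C k t) = 1) ∧
  (∀ k, 1 ≤ k → k ≤ mm C → ∀ j, xx C k t < j → j < xx C (k-1) t → vv C t j = 0) ∧
  (∀ j, j < xx C (mm C) t → vv C t j = 0)

lemma inv_zero (h01 : ∀ i, C i = 0 ∨ C i = 1) : Inv C 0 := by
  have hx0 : ∀ k, xx C k 0 = initx C k := fun k => rfl
  refine ⟨?_, ?_, ?_, ?_⟩
  · intro k hk
    rw [hx0, hx0]
    cases k with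
    | zero =>
      show initx C 1 < initx C 0
      exact initx_lt C 1 (by omega) (by omega)
    | succ k =>
      rw [initx_eq C (k+1+1) (by omega) (by omega),
          initx_eq C (k+1) (by omega) (by omega)]
      rw [ee_val_lt_iff]
      rw [Fin.mk_lt_mk]
      omega
  · intro k h1 h2
    rw [hx0]
    exact vv_initx C k h1 h2
  · intro k h1 h2 j hj1 hj2
    rw [hx0] at hj1 hj2
    have hjN : j < N := lt_of_lt_of_le hj2 (initx_le C (k-1))
    rcases vv01 C h01 0 j hjN with h | h
    · exact h
    exfalso
    obtain ⟨i, hi⟩ := one_mem C h01 j hjN h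
    rw [initx_eq C k h1 h2] at hj1
    rw [← hi] at hj1
    rw [ee_val_lt_iff, Fin.mk_lt_mk] at hj1
    rcases Nat.eq_or_lt_of_le h1 with h1' | h1'
    · -- k = 1 : i.val < mm contradicts mm - 1 < i.val
      have := i.isLt
      omega
    · have hk1 : 1 ≤ k - 1 := by omega
      rw [initx_eq C (k-1) hk1 (by omega)] at hj2
      rw [← hi] at hj2
      rw [ee_val_lt_iff, Fin.mk_lt_mk] at hj2
      omega
  · intro j hj
    rw [hx0] at hj
    have hjN : j < N := lt_of_lt_of_le hj (initx_le C (mm C))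
    rcases vv01 C h01 0 j hjN with h | h
    · exact h
    exfalso
    obtain ⟨i, hi⟩ := one_mem C h01 j hjN h
    rcases Nat.eq_zero_or_pos (mm C) with hm | hm
    · have := i.isLt; omega
    · rw [initx_eq C (mm C) hm (le_refl _)] at hj
      rw [← hi] at hj
      rw [ee_val_lt_iff, Fin.mk_lt_mk] at hj
      omega


lemma cap_of_inv (t : ℕ) (hI : Inv C t) : ∀ k, k ≤ mm C → xx C k t + k ≤ N := by
  intro k
  induction k with
  | zero => intro _; rw [xx_zero_t]; omega
  | succ k ih =>
    intro hk
    have h1 := hI.1 k (by omega)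
    have h2 := ih (by omega)
    omega

lemma xx_le (t k : ℕ) (hI : Inv C t) (hk : k ≤ mm C) : xx C k t ≤ N := by
  have := cap_of_inv C t hI k hk; omega

lemma xx_succ_le (t k : ℕ) (hI : Inv C t) (hk : k ≤ mm C) : xx C k (t+1) ≤ N := by
  rcases xx_cases C k t with he | ⟨hm, he⟩
  · rw [he]; exact xx_le C t k hI hk
  · rw [he]; have := hm.2.1; omega

lemma blocked (t k : ℕ) (hI : Inv C t) (hk1 : 1 ≤ k) (hk2 : k ≤ mm C)
    (hlt : xx C k t + 1 < N) (hv : vv C t (xx C k t + 1) = 1) :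
    xx C (k-1) t = xx C k t + 1 := by
  have hb : xx C k t < xx C (k-1) t := by
    have h := hI.1 (k-1) (by omega)
    have hkk : k - 1 + 1 = k := by omega
    rwa [hkk] at h
  by_contra hne
  have hlt2 : xx C k t + 1 < xx C (k-1) t := by omega
  have h0 := hI.2.2.1 k hk1 hk2 (xx C k t + 1) (by omega) hlt2
  omega

lemma inv_step (h01 : ∀ i, C i = 0 ∨ C i = 1) (t : ℕ) (hI : Inv C t) :
    Inv C (t+1) := by
  have hB := hI.1
  have hA := hI.2.1
  have hD := hI.2.2.1
  have hD' := hI.2.2.2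
  have hcap := cap_of_inv C t hI
  refine ⟨?_, ?_, ?_, ?_⟩
  · -- order
    intro k hk
    rcases xx_cases C (k+1) t with he | ⟨hm, he⟩
    · rw [he]
      have h1 := hB k hk
      rcases xx_cases C k t with he2 | ⟨_, he2⟩ <;> rw [he2] <;> omega
    · rw [he]
      have h1 := hB k hk
      have hne : xx C (k+1) t + 1 ≠ xx C k t := by
        intro hEq
        by_cases hk0 : k = 0
        · subst hk0
          rw [xx_zero_t] at hEq
          have := hm.2.1
          omega
        · have hv1 := hA k (by omega) (by omega)
          have hv0 := hm.2.2
          rw [hEq] at hv0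
          omega
      rcases xx_cases C k t with he2 | ⟨_, he2⟩ <;> rw [he2] <;> omega
  · -- value one
    intro k hk1 hk2
    have hv1 := hA k hk1 hk2
    have hpN : xx C k t < N := by have := hcap k hk2; omega
    rcases xx_cases C k t with he | ⟨hm, he⟩
    · rw [he]
      by_cases hpar : xx C k t % 2 = t % 2
      · by_cases hb : xx C k t + 1 < N
        · have hnm : ¬ mvc C t (xx C k t) := by
            intro hmm
            have := (moved_iff C k t).mpr hmm
            omega
          have hv0 : vv C t (xx C k t + 1) ≠ 0 := fun h => hnm ⟨hpar, hb, h⟩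
          have hv01 := vv01 C h01 t (xx C k t + 1) hb
          have hvp1 : vv C t (xx C k t + 1) = 1 := by omega
          rw [vv_step_lo C t _ hpar hb, hv1, hvp1]
          simp
        · rw [vv_step_lo_end C t _ hpar hpN hb, hv1]
      · by_cases hp0 : 1 ≤ xx C k t
        · rw [vv_step_hi C t _ hpar hp0 hpN, hv1]
          rcases vv01 C h01 t (xx C k t - 1) (by omega) with h | h <;> rw [h] <;> simp
        · have hp0' : xx C k t = 0 := by omega
          rw [hp0'] at hpar hv1 ⊢
          rw [vv_step_hi0 C t hpar (by omega), hv1]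
    · rw [he]
      have hpar := hm.1
      have hb := hm.2.1
      have hv0 := hm.2.2
      have hpar' : ¬ ((xx C k t + 1) % 2 = t % 2) := by omega
      rw [vv_step_hi C t _ hpar' (by omega) hb]
      have hsimp : xx C k t + 1 - 1 = xx C k t := by omega
      rw [hsimp, hv1, hv0]
      simp
  · -- zeros between
    intro k hk1 hk2 j hj1 hj2
    have hq1 : xx C (k-1) (t+1) ≤ xx C (k-1) t + 1 := by
      rcases xx_cases C (k-1) t with he | ⟨_, he⟩ <;> omega
    have hp1 : xx C k t ≤ xx C k (t+1) := by
      rcases xx_cases C k t with he | ⟨_, he⟩ <;> omega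
    have hjgtp : xx C k t < j := by omega
    have hjq : j ≤ xx C (k-1) t := by omega
    have hjN : j < N := by
      have := xx_succ_le C t (k-1) hI (by omega)
      by_cases hje : j = xx C (k-1) t
      · -- then k-1 moved, and mvc gives bound
        have hmv : mvc C t (xx C (k-1) t) := by
          rw [← moved_iff]
          omega
        have := hmv.2.1
        omega
      · have hc := hcap (k-1) (by omega)
        rcases Nat.eq_zero_or_pos (k-1) with h0 | h0
        · rw [h0, xx_zero_t] at hjq hje
          omega
        · omega
    by_cases hjp : j % 2 = t % 2
    · by_cases hj1N : j + 1 < N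
      · rw [vv_step_lo C t j hjp hj1N]
        by_cases hje : j = xx C (k-1) t
        · have hmv : mvc C t (xx C (k-1) t) := by
            rw [← moved_iff]; omega
          have hv0 := hmv.2.2
          rw [hje, hv0]
          rcases vv01 C h01 t (xx C (k-1) t) (by omega) with h | h <;> rw [h] <;> simp
        · have h0 : vv C t j = 0 := hD k hk1 hk2 j hjgtp (by omega)
          rw [h0]
          rcases vv01 C h01 t (j+1) hj1N with h | h <;> rw [h] <;> simp
      · rw [vv_step_lo_end C t j hjp hjN hj1N]
        by_cases hje : j = xx C (k-1) t
        · exfalso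
          have hmv : mvc C t (xx C (k-1) t) := by
            rw [← moved_iff]; omega
          have := hmv.2.1
          omega
        · exact hD k hk1 hk2 j hjgtp (by omega)
    · have hj0 : 1 ≤ j := by omega
      rw [vv_step_hi C t j hjp hj0 hjN]
      have hvj : vv C t j = 0 := by
        by_cases hje : j = xx C (k-1) t
        · exfalso
          have hmv : mvc C t (xx C (k-1) t) := by
            rw [← moved_iff]; omega
          have := hmv.1
          omega
        · exact hD k hk1 hk2 j hjgtp (by omega)
      have hvj1 : vv C t (j-1) = 0 := by
        by_cases hje : j - 1 = xx C k t
        · exfalso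
          have hpar : xx C k t % 2 = t % 2 := by omega
          have hpb : xx C k t + 1 < N := by omega
          have hmvp : mvc C t (xx C k t) :=
            ⟨hpar, hpb, by rw [show xx C k t + 1 = j by omega]; exact hvj⟩
          have := (moved_iff C k t).mpr hmvp
          omega
        · exact hD k hk1 hk2 (j-1) (by omega) (by omega)
      rw [hvj, hvj1]
      simp
  · -- zeros below
    intro j hj
    have hq1 : xx C (mm C) (t+1) ≤ xx C (mm C) t + 1 := by
      rcases xx_cases C (mm C) t with he | ⟨_, he⟩ <;> omega
    have hjq : j ≤ xx C (mm C) t := by omega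
    have hjN : j < N := by
      have := xx_succ_le C t (mm C) hI (le_refl _)
      omega
    by_cases hjp : j % 2 = t % 2
    · by_cases hj1N : j + 1 < N
      · rw [vv_step_lo C t j hjp hj1N]
        by_cases hje : j = xx C (mm C) t
        · have hmv : mvc C t (xx C (mm C) t) := by
            rw [← moved_iff]; omega
          have hv0 := hmv.2.2
          rw [hje, hv0]
          rcases vv01 C h01 t (xx C (mm C) t) (by omega) with h | h <;> rw [h] <;> simp
        · have h0 : vv C t j = 0 := hD' j (by omega)
          rw [h0]
          rcases vv01 C h01 t (j+1) hj1N with h | h <;> rw [h] <;> simp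
      · rw [vv_step_lo_end C t j hjp hjN hj1N]
        by_cases hje : j = xx C (mm C) t
        · exfalso
          have hmv : mvc C t (xx C (mm C) t) := by
            rw [← moved_iff]; omega
          have := hmv.2.1
          omega
        · exact hD' j (by omega)
    · by_cases hj0 : 1 ≤ j
      · rw [vv_step_hi C t j hjp hj0 hjN]
        have hvj : vv C t j = 0 := by
          by_cases hje : j = xx C (mm C) t
          · exfalso
            have hmv : mvc C t (xx C (mm C) t) := by
              rw [← moved_iff]; omega
            have := hmv.1
            omega
          · exact hD' j (by omega)
        have hvj1 : vv C t (j-1) = 0 := by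
          apply hD'
          omega
        rw [hvj, hvj1]
        simp
      · have hj0' : j = 0 := by omega
        rw [hj0'] at hjp ⊢
        rw [vv_step_hi0 C t hjp (by omega)]
        apply hD'
        by_cases hje : xx C (mm C) t = 0
        · exfalso
          have hmv : mvc C t (xx C (mm C) t) := by
            rw [← moved_iff]; omega
          have := hmv.1
          rw [hje] at this
          omega
        · omega
    
lemma inv_all (h01 : ∀ i, C i = 0 ∨ C i = 1) : ∀ t, Inv C t := by
  intro t
  induction t with
  | zero => exact inv_zero C h01
  | succ t ih => exact inv_step C h01 t ih


def Qp (k t : ℕ) : Prop := xx C k t + k = N ∨ xx C k (t+1) = xx C k t + 1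

lemma capped_stay (h01 : ∀ i, C i = 0 ∨ C i = 1) (t k : ℕ) (hk1 : 1 ≤ k)
    (hk2 : k ≤ mm C) (hc : xx C k t + k = N) : xx C k (t+1) + k = N := by
  have hI := inv_all C h01 t
  rcases xx_cases C k t with he | ⟨hm, he⟩
  · omega
  · exfalso
    rcases Nat.eq_or_lt_of_le hk1 with h1 | h1
    · have := hm.2.1; omega
    · have hb := hI.1 (k-1) (by omega)
      rw [show k - 1 + 1 = k by omega] at hb
      have hcp := cap_of_inv C t hI (k-1) (by omega)
      have heq : xx C (k-1) t = xx C k t + 1 := by omega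
      have hv1 := hI.2.1 (k-1) (by omega) (by omega)
      rw [heq] at hv1
      have := hm.2.2
      omega

lemma stepQ (h01 : ∀ i, C i = 0 ∨ C i = 1) (k t : ℕ) (hk1 : 1 ≤ k)
    (hk2 : k ≤ mm C) (hQ' : Qp C (k-1) (t+1)) (h : Qp C k t) : Qp C k (t+1) := by
  rcases h with hc | hmv
  · exact Or.inl (capped_stay C h01 t k hk1 hk2 hc)
  · have hm := (moved_iff C k t).mp hmv
    by_cases hcap2 : xx C k (t+1) + k = N
    · exact Or.inl hcap2
    right
    rw [moved_iff]
    have hI1 := inv_all C h01 (t+1)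
    have hcp := cap_of_inv C (t+1) hI1 k hk2
    have hbd : xx C k (t+1) + 1 < N := by omega
    refine ⟨by have := hm.1; omega, hbd, ?_⟩
    by_contra hne
    have hv1 : vv C (t+1) (xx C k (t+1) + 1) = 1 := by
      rcases vv01 C h01 (t+1) (xx C k (t+1) + 1) hbd with h | h
      · exact absurd h hne
      · exact h
    have hblk := blocked C (t+1) k hI1 hk1 hk2 hbd hv1
    rcases hQ' with hc | hmq
    · omega
    · have hm2 := (moved_iff C (k-1) (t+1)).mp hmq
      have hp := hm2.1
      rw [hblk] at hp
      have := hm.1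
      omega

lemma baseQ (h01 : ∀ i, C i = 0 ∨ C i = 1) (k : ℕ) (hk1 : 1 ≤ k) (hk2 : k ≤ mm C)
    (hQ' : ∀ s, k ≤ s → Qp C (k-1) s) : Qp C k (k+1) := by
  by_cases h : Qp C k k
  · exact stepQ C h01 k k hk1 hk2 (hQ' (k+1) (by omega)) h
  · rw [Qp, not_or] at h
    obtain ⟨hnc, hnm2⟩ := h
    have hI := inv_all C h01 k
    have hcapk := cap_of_inv C k hI k hk2
    have hb1 : xx C k k + 1 < N := by omega
    have hnmv : ¬ mvc C k (xx C k k) := fun hm => hnm2 ((moved_iff C k k).mpr hm)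
    have hstay : xx C k (k+1) = xx C k k := not_moved C k k hnmv
    by_cases hpar : xx C k k % 2 = k % 2
    · exfalso
      have hvne : vv C k (xx C k k + 1) ≠ 0 := fun h0 => hnmv ⟨hpar, hb1, h0⟩
      have hv1 : vv C k (xx C k k + 1) = 1 := by
        rcases vv01 C h01 k _ hb1 with h | h
        · exact absurd h hvne
        · exact h
      have hblk := blocked C k k hI hk1 hk2 hb1 hv1
      rcases hQ' k (le_refl k) with hc | hmq
      · omega
      · have hm := (moved_iff C (k-1) k).mp hmq
        have := hm.1
        rw [hblk] at this
        omega
    · right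
      rw [moved_iff, hstay]
      refine ⟨by omega, hb1, ?_⟩
      by_contra hne
      have hI1 := inv_all C h01 (k+1)
      have hv1 : vv C (k+1) (xx C k k + 1) = 1 := by
        rcases vv01 C h01 (k+1) _ hb1 with h | h
        · exact absurd h hne
        · exact h
      have hblk := blocked C (k+1) k hI1 hk1 hk2 (by rw [hstay]; exact hb1)
        (by rw [hstay]; exact hv1)
      rw [hstay] at hblk
      rcases hQ' (k+1) (by omega) with hc | hmq
      · omega
      · have hm := (moved_iff C (k-1) (k+1)).mp hmq
        have hp := hm.1
        rw [hblk] at hp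
        omega

lemma QAll (h01 : ∀ i, C i = 0 ∨ C i = 1) :
    ∀ k, k ≤ mm C → ∀ t, k + 1 ≤ t → Qp C k t := by
  intro k
  induction k with
  | zero =>
    intro _ t _
    exact Or.inl (by rw [xx_zero_t]; omega)
  | succ k ih =>
    intro hk t ht
    have ihk := ih (by omega)
    have hQ' : ∀ s, k + 1 ≤ s → Qp C (k+1-1) s := by
      intro s hs
      exact ihk s (by omega)
    induction t with
    | zero => omega
    | succ t iht =>
      rcases Nat.eq_or_lt_of_le ht with hEq | hlt
      · have : t = k + 1 := by omega
        subst this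
        exact baseQ C h01 (k+1) (by omega) hk hQ'
      · exact stepQ C h01 (k+1) t (by omega) hk (hQ' (t+1) (by omega))
          (iht (by omega))

lemma arrive (h01 : ∀ i, C i = 0 ∨ C i = 1) (k : ℕ) (hk1 : 1 ≤ k)
    (hk2 : k ≤ mm C) : ∀ t, N + 1 ≤ t → xx C k t + k = N := by
  have hkN : k ≤ N := le_trans hk2 (mm_le C)
  have grow : ∀ j, xx C k (k+1+j) + k = N ∨ j ≤ xx C k (k+1+j) := by
    intro j
    induction j with
    | zero => right; omega
    | succ j ihj =>
      have hstep : k+1+(j+1) = (k+1+j)+1 := by omega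
      rcases ihj with hc | hle
      · left
        rw [hstep]
        exact capped_stay C h01 (k+1+j) k hk1 hk2 hc
      · rcases QAll C h01 k hk2 (k+1+j) (by omega) with hc | hm
        · left
          rw [hstep]
          exact capped_stay C h01 (k+1+j) k hk1 hk2 hc
        · right
          rw [hstep, hm]
          omega
  have hN1 : xx C k (N+1) + k = N := by
    have hg := grow (N - k)
    have hEq : k + 1 + (N - k) = N + 1 := by omega
    rw [hEq] at hg
    have hcapN := cap_of_inv C (N+1) (inv_all C h01 (N+1)) k hk2
    rcases hg with h | h
    · exact h
    · omega
  intro t ht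
  obtain ⟨s, rfl⟩ : ∃ s, t = (N+1) + s := ⟨t - (N+1), by omega⟩
  clear ht
  induction s with
  | zero => exact hN1
  | succ s ihs =>
    rw [show N+1+(s+1) = (N+1+s)+1 by omega]
    exact capped_stay C h01 (N+1+s) k hk1 hk2 ihs

lemma mono01 (h01 : ∀ i, C i = 0 ∨ C i = 1) (hN : 3 ≤ N) :
    Monotone (runF C (2*(N-1))) := by
  have hTN : N + 1 ≤ 2*(N-1) := by omega
  have hI := inv_all C h01 (2*(N-1))
  have hmN := mm_le C
  have hone : ∀ j, N - mm C ≤ j → ∀ h : j < N, vv C (2*(N-1)) j = 1 := by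
    intro j hj hjN
    have hk1 : 1 ≤ N - j := by omega
    have hk2 : N - j ≤ mm C := by omega
    have harr := arrive C h01 (N-j) hk1 hk2 (2*(N-1)) hTN
    have hxj : xx C (N-j) (2*(N-1)) = j := by omega
    have hv := hI.2.1 (N-j) hk1 hk2
    rwa [hxj] at hv
  have hzero : ∀ j, j < N - mm C → vv C (2*(N-1)) j = 0 := by
    intro j hj
    apply hI.2.2.2
    rcases Nat.eq_zero_or_pos (mm C) with h0 | h0
    · rw [h0, xx_zero_t]; omega
    · have := arrive C h01 (mm C) h0 (le_refl _) (2*(N-1)) hTN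
      omega
  intro a b hab
  have hva : runF C (2*(N-1)) a = vv C (2*(N-1)) a.val := by
    rw [vv_eq C (2*(N-1)) a.val a.isLt, Fin.eta]
  have hvb : runF C (2*(N-1)) b = vv C (2*(N-1)) b.val := by
    rw [vv_eq C (2*(N-1)) b.val b.isLt, Fin.eta]
  have hab' : a.val ≤ b.val := hab
  rw [hva, hvb]
  by_cases hc : a.val < N - mm C
  · rw [hzero a.val hc]
    rcases vv01 C h01 (2*(N-1)) b.val b.isLt with h | h <;> rw [h] <;> norm_num
  · rw [hone a.val (by omega) a.isLt, hone b.val (by omega) b.isLt]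

end OETS

theorem odd_even_transposition_sorts {N : ℕ} (A : Fin N → ℤ) :
    Monotone ((fun B => phase 1 (phase 0 B))^[N - 1] A) ∧
      Multiset.map ((fun B => phase 1 (phase 0 B))^[N - 1] A) Finset.univ.val =
        Multiset.map A Finset.univ.val := by
  constructor
  · by_cases hN : 3 ≤ N
    · rw [(OETS.runF_two_mul A (N-1)).symm]
      intro a b hab
      set D := OETS.runF A (2*(N-1)) with hD
      show D a ≤ D b
      set g : ℤ → ℤ := fun x => if D a ≤ x then 1 else 0 with hg
      have hgm : Monotone g := by
        intro u v huv
        by_cases h1 : D a ≤ u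
        · simp only [hg]
          rw [if_pos h1, if_pos (le_trans h1 huv)]
        · simp only [hg]
          rw [if_neg h1]
          split_ifs <;> norm_num
      have h01 : ∀ i, (g ∘ A) i = 0 ∨ (g ∘ A) i = 1 := by
        intro i
        simp only [hg, Function.comp]
        split_ifs <;> simp
      have hm := OETS.mono01 (g ∘ A) h01 hN hab
      rw [OETS.runF_comm g hgm A (2*(N-1))] at hm
      have hm' : g (D a) ≤ g (D b) := hm
      by_contra hcon
      push_neg at hcon
      have e1 : g (D a) = 1 := by simp only [hg]; rw [if_pos (le_refl _)]
      have e2 : g (D b) = 0 := by simp only [hg]; rw [if_neg (not_le.mpr hcon)]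
      rw [e1, e2] at hm'
      omega
    · rcases (show N = 0 ∨ N = 1 ∨ N = 2 by omega) with h | h | h
      · subst h; intro a b _; exact a.elim0
      · subst h; intro a b _
        have : a = b := Subsingleton.elim a b
        rw [this]
      · subst h
        intro a b hab
        rw [show 2 - 1 = 1 from rfl, Function.iterate_one]
        have hP1 : ∀ (B : Fin 2 → ℤ) (i : Fin 2), phase 1 B i = B i := by
          intro B i
          rw [OETS.phase_eq_min_max]
          match i with
          | ⟨0, _⟩ => norm_num
          | ⟨1, _⟩ => norm_num
        rw [hP1, hP1]
        have hab' : a.val ≤ b.val := hab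
        by_cases hEq : a = b
        · rw [hEq]
        · have ha := a.isLt
          have hb := b.isLt
          have hne : a.val ≠ b.val := fun hc => hEq (Fin.ext hc)
          have hav : a.val = 0 := by omega
          have hbv : b.val = 1 := by omega
          have ha0 : a = ⟨0, by omega⟩ := Fin.ext hav
          have hb1 : b = ⟨1, by omega⟩ := Fin.ext hbv
          rw [ha0, hb1, OETS.phase_eq_min_max, OETS.phase_eq_min_max]
          norm_num
  · have key : ∀ n, Multiset.map ((fun B => phase 1 (phase 0 B))^[n] A) Finset.univ.val
        = Multiset.map A Finset.univ.val := by
      intro n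
      induction n with
      | zero => rfl
      | succ n ih =>
        rw [Function.iterate_succ_apply']
        rw [OETS.multiset_phase 1, OETS.multiset_phase 0, ih]
    exact key (N-1)
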